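/- TeamCTL is neither union closed nor flat: there exist a finite Kripke structure 𝒦 and two worlds w₁, w₂ of 𝒦 such that 𝒦, ⟦w₁⟧ ⊨ EF p and 𝒦, ⟦w₂⟧ ⊨ EF p under team semantics, but 𝒦, ⟦w₁, w₂⟧ ⊭ EF p. (A witness is the structure consisting of two disjoint chains with terminal self-loops, where p is labeled at the third world of the first chain and at the second world of the second chain, and the formula EF p := E[(p∨¬p) U p].) -/

import Mathlib

namespace TeamCTL

/-- A Kripke structure: a finite set of worlds, a left-total transition relation,
and a labeling function. -/
structure Kripke (AP : Type) where
  W : Type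
  [instFin : Fintype W]
  R : W → W → Prop
  leftTotal : ∀ w : W, ∃ w' : W, R w w'
  η : W → Set AP

attribute [instance] Kripke.instFin

/-- CTL formulae in negation normal form. -/
inductive CTL (AP : Type) : Type
  | atom : AP → CTL AP
  | natom : AP → CTL AP
  | conj : CTL AP → CTL AP → CTL AP
  | disj : CTL AP → CTL AP → CTL AP
  | ex : CTL AP → CTL AP
  | ax : CTL AP → CTL AP
  | eu : CTL AP → CTL AP → CTL AP
  | au : CTL AP → CTL AP → CTL AP
  | er : CTL AP → CTL AP → CTL AP
  | ar : CTL AP → CTL AP → CTL AP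

variable {AP : Type}

/-- `π` is a path of `K` starting at the world `w`. -/
def IsPathFrom (K : Kripke AP) (w : K.W) (π : ℕ → K.W) : Prop :=
  π 0 = w ∧ ∀ i : ℕ, K.R (π i) (π (i + 1))

/-- A team of `K` is a finite multiset of worlds, represented as a list
(the positions of the list play the role of the indices of the indexed multiset;
multiset equality is list permutation).  A `T`-compatible function assigns to
each (indexed) element of the team a path starting at that world. -/
def Compatible (K : Kripke AP) (T : List K.W) (f : Fin T.length → ℕ → K.W) : Prop :=
  ∀ i : Fin T.length, IsPathFrom K (T.get i) (f i)

/-- `T[f,n]`: the team obtained by synchronously proceeding to the `n`-th element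
of each chosen path. -/
def step (K : Kripke AP) {T : List K.W} (f : Fin T.length → ℕ → K.W) (n : ℕ) : List K.W :=
  List.ofFn fun i => f i n

/-- Team semantics for CTL: `TSat K φ T` means `K, T ⊨ φ`. -/
def TSat (K : Kripke AP) : CTL AP → List K.W → Prop
  | .atom p, T => ∀ w ∈ T, p ∈ K.η w
  | .natom p, T => ∀ w ∈ T, p ∉ K.η w
  | .conj φ ψ, T => TSat K φ T ∧ TSat K ψ T
  | .disj φ ψ, T => ∃ T₁ T₂ : List K.W, (T₁ ++ T₂).Perm T ∧ TSat K φ T₁ ∧ TSat K ψ T₂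
  | .ex φ, T => ∃ f, Compatible K T f ∧ TSat K φ (step K f 1)
  | .ax φ, T => ∀ f, Compatible K T f → TSat K φ (step K f 1)
  | .eu φ ψ, T => ∃ f, Compatible K T f ∧ ∃ k : ℕ,
      TSat K ψ (step K f k) ∧ ∀ j : ℕ, 1 ≤ j → j < k → TSat K φ (step K f j)
  | .au φ ψ, T => ∀ f, Compatible K T f → ∃ k : ℕ,
      TSat K ψ (step K f k) ∧ ∀ j : ℕ, 1 ≤ j → j < k → TSat K φ (step K f j)
  | .er φ ψ, T => ∃ f, Compatible K T f ∧ ∀ k : ℕ,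
      TSat K ψ (step K f k) ∨ ∃ j : ℕ, 1 ≤ j ∧ j < k ∧ TSat K φ (step K f j)
  | .ar φ ψ, T => ∀ f, Compatible K T f → ∀ k : ℕ,
      TSat K ψ (step K f k) ∨ ∃ j : ℕ, 1 ≤ j ∧ j < k ∧ TSat K φ (step K f j)

/-- Classical (pointed) semantics for CTL: `CSat K φ w` means `K, w ⊨ φ`. -/
def CSat (K : Kripke AP) : CTL AP → K.W → Prop
  | .atom p, w => p ∈ K.η w
  | .natom p, w => p ∉ K.η w
  | .conj φ ψ, w => CSat K φ w ∧ CSat K ψ w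
  | .disj φ ψ, w => CSat K φ w ∨ CSat K ψ w
  | .ex φ, w => ∃ π, IsPathFrom K w π ∧ CSat K φ (π 1)
  | .ax φ, w => ∀ π, IsPathFrom K w π → CSat K φ (π 1)
  | .eu φ ψ, w => ∃ π, IsPathFrom K w π ∧ ∃ k : ℕ, CSat K ψ (π k) ∧ ∀ j < k, CSat K φ (π j)
  | .au φ ψ, w => ∀ π, IsPathFrom K w π → ∃ k : ℕ, CSat K ψ (π k) ∧ ∀ j < k, CSat K φ (π j)
  | .er φ ψ, w => ∃ π, IsPathFrom K w π ∧ ∀ k : ℕ, CSat K ψ (π k) ∨ ∃ j < k, CSat K φ (π j)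
  | .ar φ ψ, w => ∀ π, IsPathFrom K w π → ∀ k : ℕ, CSat K ψ (π k) ∨ ∃ j < k, CSat K φ (π j)

/-- `EF φ := E[(p ∨ ¬p) U φ]`. -/
def EF (p : AP) (φ : CTL AP) : CTL AP := .eu (.disj (.atom p) (.natom p)) φ

/-- Deterministic successor function on 6 worlds: two chains
`0 → 1 → 2 → 3 ↺` and `4 → 5 → 3 ↺`. -/
def next : Fin 6 → Fin 6 := ![1, 2, 3, 3, 5, 3]

/-- The witness Kripke structure: `p` holds exactly at worlds 2 and 5. -/
def Kp (p : ℕ) : Kripke ℕ where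
  W := Fin 6
  R a b := next a = b
  leftTotal w := ⟨next w, rfl⟩
  η w := if w = 2 ∨ w = 5 then {p} else ∅

lemma path_eq {p : ℕ} {w : Fin 6} {π : ℕ → Fin 6}
    (h : IsPathFrom (Kp p) w π) (n : ℕ) : π n = next^[n] w := by
  induction n with
  | zero => exact h.1
  | succ n ih =>
    have := h.2 n
    simp only [Kp] at this
    rw [← this, ih, Function.iterate_succ_apply']

lemma mem_eta {p : ℕ} {w : Fin 6} (h : p ∈ (Kp p).η w) : w = 2 ∨ w = 5 := by
  by_contra hc
  simp only [Kp, if_neg hc] at h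
  exact h

lemma eta_self {p : ℕ} {w : Fin 6} (h : w = 2 ∨ w = 5) : p ∈ (Kp p).η w := by
  simp only [Kp, if_pos h]
  rfl

/-- TeamCTL is neither union closed nor flat: there are a finite
Kripke structure `𝒦` and worlds `w₁, w₂` with `𝒦,⟦w₁⟧ ⊨ EF p` and
`𝒦,⟦w₂⟧ ⊨ EF p`, but `𝒦,⟦w₁,w₂⟧ ⊭ EF p`. -/
theorem not_union_closed_not_flat (p : ℕ) :
    ∃ (K : Kripke ℕ) (w₁ w₂ : K.W),
      TSat K (EF p (.atom p)) [w₁] ∧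
      TSat K (EF p (.atom p)) [w₂] ∧
      ¬ TSat K (EF p (.atom p)) [w₁, w₂] := by
  refine ⟨Kp p, (0 : Fin 6), (4 : Fin 6), ?_, ?_, ?_⟩
  · -- team [0] : reach p at step 2
    refine ⟨fun _ n => next^[n] 0, ?_, 2, ?_, ?_⟩
    · intro i
      refine ⟨?_, fun n => (Function.iterate_succ_apply' next n 0).symm⟩
      fin_cases i; rfl
    · intro w hw
      obtain ⟨_, hw⟩ := List.mem_ofFn.mp hw
      subst hw
      exact eta_self (by left; rfl)
    · intro j h1 h2
      interval_cases j
      refine ⟨[], [next^[1] 0], by simp [step]; exact List.Perm.refl _, by simp [TSat], ?_⟩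
      intro w hw
      replace hw : w = next^[1] 0 := List.mem_singleton.mp hw
      subst hw
      intro h
      have := mem_eta h
      revert this; decide
  · -- team [4] : reach p at step 1
    refine ⟨fun _ n => next^[n] 4, ?_, 1, ?_, ?_⟩
    · intro i
      refine ⟨?_, fun n => (Function.iterate_succ_apply' next n 4).symm⟩
      fin_cases i; rfl
    · intro w hw
      obtain ⟨_, hw⟩ := List.mem_ofFn.mp hw
      subst hw
      exact eta_self (by right; rfl)
    · intro j h1 h2
      omega
  · -- team [0,4] : never simultaneously at p
    rintro ⟨f, hc, k, hk, -⟩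
    have h0 : f ⟨0, Nat.zero_lt_two⟩ k = next^[k] 0 := path_eq (hc ⟨0, Nat.zero_lt_two⟩) k
    have h4 : f ⟨1, Nat.one_lt_two⟩ k = next^[k] 4 := path_eq (hc ⟨1, Nat.one_lt_two⟩) k
    have hm0 : next^[k] 0 ∈ step (Kp p) f k := by
      rw [← h0]; simp [step, List.mem_ofFn]; exact List.mem_cons_self
    have hm4 : next^[k] 4 ∈ step (Kp p) f k := by
      rw [← h4]; simp [step, List.mem_ofFn]; exact List.mem_cons_of_mem _ List.mem_cons_self
    have e0 := mem_eta (hk _ hm0)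
    have e4 := mem_eta (hk _ hm4)
    -- next^[k] 0 ∈ {2,5} forces k = 2; next^[k] 4 ∈ {2,5} forces k = 1
    have f0 : ∀ m, next^[3 + m] (0 : Fin 6) = 3 := by
      intro m
      rw [Nat.add_comm, Function.iterate_add_apply]
      have : next^[3] (0 : Fin 6) = 3 := by decide
      rw [this]
      exact Function.iterate_fixed (by decide) m
    have f4 : ∀ m, next^[2 + m] (4 : Fin 6) = 3 := by
      intro m
      rw [Nat.add_comm, Function.iterate_add_apply]
      have : next^[2] (4 : Fin 6) = 3 := by decide
      rw [this]
      exact Function.iterate_fixed (by decide) m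
    match k with
    | 0 => revert e0; decide
    | 1 => revert e0; decide
    | 2 => revert e4; decide
    | (n + 3) =>
      rw [show n + 3 = 3 + n by omega, f0 n] at e0
      revert e0; decide

end TeamCTL
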